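/- Let A ∈ ℝ^{n×d} be a matrix with rows a_1, …, a_n. For each i, define the L1 sensitivity s_i = sup { |⟨a_i, x⟩| / Σ_{j=1}^n |⟨a_j, x⟩| : x ∈ ℝ^d, Σ_{j=1}^n |⟨a_j, x⟩| > 0 } (with s_i = 0 if no such x exists). Then Σ_{i=1}^n s_i ≤ d. -/

import Mathlib

open RealInnerProductSpace


lemma l1_core {d m : ℕ} (b : Fin m → EuclideanSpace ℝ (Fin d))
    (hker : ∀ x : EuclideanSpace ℝ (Fin d), (∑ j, |⟪b j, x⟫|) = 0 → x = 0) :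
    ∃ v : Fin d → EuclideanSpace ℝ (Fin d),
      (∀ k, (∑ j, |⟪b j, v k⟫|) ≤ 1) ∧
      ∀ (y x : EuclideanSpace ℝ (Fin d)),
        |⟪y, x⟫| ≤ (∑ j, |⟪b j, x⟫|) * ∑ k, |⟪y, v k⟫| := by
  set M : EuclideanSpace ℝ (Fin d) → ℝ := fun x => ∑ j, |⟪b j, x⟫| with hMdef
  have hMnn : ∀ x, 0 ≤ M x := fun x => Finset.sum_nonneg fun j _ => abs_nonneg _
  have hM0 : M 0 = 0 := by simp [hMdef]
  have hcont : Continuous M :=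
    continuous_finset_sum _ fun j _ => (continuous_const.inner continuous_id).abs
  have hhom : ∀ (s : ℝ) (x : EuclideanSpace ℝ (Fin d)), M (s • x) = |s| * M x := by
    intro s x
    simp only [hMdef, real_inner_smul_right, abs_mul, Finset.mul_sum]
  by_cases hd : d = 0
  · subst hd
    refine ⟨fun _ => 0, fun k => k.elim0, fun y x => ?_⟩
    have hx : x = 0 := Subsingleton.elim x 0
    subst hx
    simp [inner_zero_right]
  haveI : Nonempty (Fin d) := ⟨⟨0, Nat.pos_of_ne_zero hd⟩⟩
  have hMpos : ∀ x : EuclideanSpace ℝ (Fin d), x ≠ 0 → 0 < M x := by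
    intro x hx
    rcases (hMnn x).lt_or_eq with h | h
    · exact h
    · exact absurd (hker x h.symm) hx
  -- minimum on sphere
  obtain ⟨x₀, hx₀s, hx₀min⟩ := (isCompact_sphere (0 : EuclideanSpace ℝ (Fin d)) 1).exists_isMinOn
    (NormedSpace.sphere_nonempty.2 zero_le_one) hcont.continuousOn
  have hx₀ : ‖x₀‖ = 1 := by simpa using mem_sphere_zero_iff_norm.1 hx₀s
  have hc : 0 < M x₀ := hMpos x₀ (by intro h; rw [h] at hx₀; simp at hx₀)
  have hcb : ∀ x : EuclideanSpace ℝ (Fin d), M x₀ * ‖x‖ ≤ M x := by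
    intro x
    rcases eq_or_ne x 0 with rfl | hx
    · simp [hM0]
    · have h1 : ‖x‖⁻¹ • x ∈ Metric.sphere (0 : EuclideanSpace ℝ (Fin d)) 1 := by
        simp [norm_smul, norm_norm, abs_of_nonneg (norm_nonneg x),
          inv_mul_cancel₀ (norm_ne_zero_iff.2 hx)]
      have h2 : M x₀ ≤ M (‖x‖⁻¹ • x) := hx₀min h1
      have h3 : M (‖x‖⁻¹ • x) = ‖x‖⁻¹ * M x := by
        rw [hhom, abs_of_nonneg (inv_nonneg.2 (norm_nonneg x))]
      rw [h3] at h2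
      have h4 : 0 < ‖x‖ := norm_pos_iff.2 hx
      calc M x₀ * ‖x‖ ≤ (‖x‖⁻¹ * M x) * ‖x‖ := by nlinarith
        _ = M x := by field_simp
  -- compactness of the unit ball of M
  have hK : IsCompact {x : EuclideanSpace ℝ (Fin d) | M x ≤ 1} := by
    refine IsCompact.of_isClosed_subset (isCompact_closedBall (0 : EuclideanSpace ℝ (Fin d)) (M x₀)⁻¹)
      (isClosed_le hcont continuous_const) ?_
    intro x hx
    simp only [Metric.mem_closedBall, dist_zero_right]
    have h1 := hcb x
    have h2 : M x ≤ 1 := hx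
    have h3 : M x₀ * ‖x‖ ≤ 1 := h1.trans h2
    have h4 : (0:ℝ) ≤ (M x₀)⁻¹ := inv_nonneg.2 hc.le
    calc ‖x‖ = (M x₀)⁻¹ * (M x₀ * ‖x‖) := by field_simp
      _ ≤ (M x₀)⁻¹ * 1 := by nlinarith
      _ = (M x₀)⁻¹ := mul_one _
  have hS : IsCompact {v : Fin d → EuclideanSpace ℝ (Fin d) | ∀ k, M (v k) ≤ 1} := by
    have heq : {v : Fin d → EuclideanSpace ℝ (Fin d) | ∀ k, M (v k) ≤ 1}
        = Set.univ.pi (fun _ : Fin d => {x : EuclideanSpace ℝ (Fin d) | M x ≤ 1}) := by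
      ext v; simp [Set.mem_pi]
    rw [heq]
    exact isCompact_univ_pi fun _ => hK
  -- determinant function
  set g : (Fin d → EuclideanSpace ℝ (Fin d)) → ℝ := fun v => |(Matrix.of fun l k => v k l).det| with hgdef
  have hg : Continuous g := by
    apply Continuous.abs
    apply Continuous.matrix_det
    exact continuous_pi fun l => continuous_pi fun k =>
      by fun_prop
  -- starting point with nonzero determinant
  have hsingle : ∀ k : Fin d, 0 < M (EuclideanSpace.single k (1:ℝ)) := by
    intro k
    apply hMpos
    intro h
    have : (EuclideanSpace.single k (1:ℝ)) k = 0 := by rw [h]; rfl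
    simp [EuclideanSpace.single_apply] at this
  set v₀ : Fin d → EuclideanSpace ℝ (Fin d) := fun k =>
    (M (EuclideanSpace.single k 1))⁻¹ • EuclideanSpace.single k 1 with hv₀def
  have hv₀S : v₀ ∈ {v : Fin d → EuclideanSpace ℝ (Fin d) | ∀ k, M (v k) ≤ 1} := by
    intro k
    rw [hv₀def]
    simp only []
    rw [hhom, abs_of_nonneg (inv_nonneg.2 (hsingle k).le),
      inv_mul_cancel₀ (hsingle k).ne']
  have hv₀g : 0 < g v₀ := by
    have heq : (Matrix.of fun l k => v₀ k l)
        = Matrix.diagonal (fun k => (M (EuclideanSpace.single k 1))⁻¹) := by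
      ext l k
      simp only [Matrix.of_apply, hv₀def, Matrix.diagonal]
      have : (((M (EuclideanSpace.single k 1))⁻¹ : ℝ) • EuclideanSpace.single k (1:ℝ)) l
          = (M (EuclideanSpace.single k 1))⁻¹ * (EuclideanSpace.single k (1:ℝ)) l := rfl
      rw [this, EuclideanSpace.single_apply]
      by_cases hlk : l = k
      · subst hlk; simp
      · simp [hlk, Ne.symm hlk]
    rw [hgdef]
    simp only []
    rw [heq, Matrix.det_diagonal, abs_pos]
    exact Finset.prod_ne_zero_iff.2 fun k _ => inv_ne_zero (hsingle k).ne'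
  obtain ⟨v, hvS, hvmax⟩ := hS.exists_isMaxOn ⟨v₀, hv₀S⟩ hg.continuousOn
  set A : Matrix (Fin d) (Fin d) ℝ := Matrix.of fun l k => v k l with hAdef
  have hD : 0 < |A.det| := lt_of_lt_of_le hv₀g (hvmax hv₀S)
  have hdetne : A.det ≠ 0 := fun h => by simp [h] at hD
  -- cramer bound
  have hcr : ∀ (x : EuclideanSpace ℝ (Fin d)) (k : Fin d), |(A.updateCol k ⇑x).det| ≤ M x * |A.det| := by
    intro x k
    rcases (hMnn x).eq_or_lt with h0 | hpos
    · have hx0 : x = 0 := hker x h0.symm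
      subst hx0
      have hcol : (A.updateCol k ⇑(0 : EuclideanSpace ℝ (Fin d))).det = 0 := by
        apply Matrix.det_eq_zero_of_column_eq_zero k
        intro l
        simp only [Matrix.updateCol_apply, if_pos rfl]
        rfl
      rw [hcol]
      simp [hM0]
    · set s : ℝ := (M x)⁻¹ with hsdef
      have hwS : Function.update v k (s • x) ∈ {v : Fin d → EuclideanSpace ℝ (Fin d) | ∀ k, M (v k) ≤ 1} := by
        intro k'
        rcases eq_or_ne k' k with rfl | hk
        · rw [Function.update_self, hhom, hsdef,
            abs_of_nonneg (inv_nonneg.2 hpos.le), inv_mul_cancel₀ hpos.ne']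
        · rw [Function.update_of_ne hk]
          exact hvS k'
      have hle : g (Function.update v k (s • x)) ≤ g v := hvmax hwS
      have hA' : (Matrix.of fun l k' => (Function.update v k (s • x)) k' l)
          = A.updateCol k (s • ⇑x) := by
        ext l k'
        rcases eq_or_ne k' k with rfl | hk
        · simp only [Matrix.of_apply, Function.update_self,
            Matrix.updateCol_apply, if_pos rfl]
          rfl
        · simp [Matrix.updateCol_apply, hk, Function.update_of_ne hk, hAdef]
      rw [hgdef] at hle
      simp only [] at hle
      rw [hA', Matrix.det_updateCol_smul, abs_mul, hsdef,
        abs_of_nonneg (inv_nonneg.2 hpos.le)] at hle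
      have : |A.det| = g v := rfl
      calc |(A.updateCol k ⇑x).det|
          = M x * ((M x)⁻¹ * |(A.updateCol k ⇑x).det|) := by field_simp
        _ ≤ M x * g v := by nlinarith
        _ = M x * |A.det| := rfl
  refine ⟨v, fun k => hvS k, fun y x => ?_⟩
  set cr : Fin d → ℝ := fun k => A.det⁻¹ * (A.updateCol k ⇑x).det with hcrdef
  have hrep : x = ∑ k, cr k • v k := by
    apply PiLp.ext
    intro l
    have hmv := congrFun (Matrix.mulVec_cramer A ⇑x) l
    simp only [Matrix.mulVec, dotProduct, Pi.smul_apply, smul_eq_mul] at hmv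
    have hsum : (∑ k, cr k • v k) l = ∑ k, cr k * (v k) l := by
      rw [WithLp.ofLp_sum, Finset.sum_apply]
      rfl
    rw [hsum]
    have : ∀ k, cr k * (v k) l = A.det⁻¹ * (A l k * Matrix.cramer A ⇑x k) := by
      intro k
      rw [hcrdef]
      simp only [Matrix.cramer_apply]
      have : A l k = (v k) l := rfl
      rw [this]
      ring
    rw [Finset.sum_congr rfl fun k _ => this k, ← Finset.mul_sum, hmv]
    field_simp
  have hcrle : ∀ k, |cr k| ≤ M x := by
    intro k
    rw [hcrdef]
    simp only [abs_mul, abs_inv]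
    calc |A.det|⁻¹ * |(A.updateCol k ⇑x).det|
        ≤ |A.det|⁻¹ * (M x * |A.det|) := by
          apply mul_le_mul_of_nonneg_left (hcr x k) (inv_nonneg.2 hD.le)
      _ = M x := by field_simp
  calc |⟪y, x⟫| = |∑ k, cr k * ⟪y, v k⟫| := by
        rw [hrep, inner_sum]
        congr 1
        exact Finset.sum_congr rfl fun k _ => real_inner_smul_right _ _ _
    _ ≤ ∑ k, |cr k * ⟪y, v k⟫| := Finset.abs_sum_le_sum_abs _ _
    _ ≤ ∑ k, M x * |⟪y, v k⟫| := by
        apply Finset.sum_le_sum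
        intro k _
        rw [abs_mul]
        exact mul_le_mul_of_nonneg_right (hcrle k) (abs_nonneg _)
    _ = M x * ∑ k, |⟪y, v k⟫| := by rw [Finset.mul_sum]

set_option maxHeartbeats 1000000 in
/-- For a matrix with rows `a 1, …, a n ∈ ℝ^d`, the L1 sensitivities
`s i = sup { |⟨a i, x⟩| / ∑ j, |⟨a j, x⟩| : x ∈ ℝ^d, ∑ j, |⟨a j, x⟩| > 0 }`
(with `s i = 0` if no such `x` exists, via `sSup ∅ = 0` in ℝ) sum to at most `d`. -/
theorem l1_sensitivities_sum_le (n d : ℕ) (a : Fin n → EuclideanSpace ℝ (Fin d)) :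
    ∑ i, sSup {r : ℝ | ∃ x : EuclideanSpace ℝ (Fin d),
        0 < ∑ j, |⟪a j, x⟫| ∧ r = |⟪a i, x⟫| / ∑ j, |⟪a j, x⟫|} ≤ (d : ℝ) := by
  classical
  by_cases hdeg : ∀ x : EuclideanSpace ℝ (Fin d), ¬ (0 < ∑ j, |⟪a j, x⟫|)
  · have hempty : ∀ i : Fin n, {r : ℝ | ∃ x : EuclideanSpace ℝ (Fin d),
        0 < ∑ j, |⟪a j, x⟫| ∧ r = |⟪a i, x⟫| / ∑ j, |⟪a j, x⟫|} = (∅ : Set ℝ) := by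
      intro i
      rw [Set.eq_empty_iff_forall_notMem]
      rintro r ⟨x, hx, -⟩
      exact hdeg x hx
    simp only [hempty, Real.sSup_empty]
    simp
  push_neg at hdeg
  obtain ⟨x₀, hx₀⟩ := hdeg
  have hne : ∀ i : Fin n, Set.Nonempty {r : ℝ | ∃ x : EuclideanSpace ℝ (Fin d),
      0 < ∑ j, |⟪a j, x⟫| ∧ r = |⟪a i, x⟫| / ∑ j, |⟪a j, x⟫|} :=
    fun i => ⟨_, ⟨x₀, hx₀, rfl⟩⟩
  have key : ∀ δ : ℝ, 0 < δ → ∑ i, sSup {r : ℝ | ∃ x : EuclideanSpace ℝ (Fin d),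
      0 < ∑ j, |⟪a j, x⟫| ∧ r = |⟪a i, x⟫| / ∑ j, |⟪a j, x⟫|} ≤ (d : ℝ) + δ := by
    intro δ hδ
    set δ' : ℝ := δ / (2 * (n + 1)) with hδ'def
    have hδ' : 0 < δ' := by positivity
    have hδ'eq : δ' * (2 * ((n:ℝ) + 1)) = δ := by rw [hδ'def]; field_simp
    -- near-optimal witnesses
    have hpick : ∀ i : Fin n, ∃ x : EuclideanSpace ℝ (Fin d),
        0 < ∑ j, |⟪a j, x⟫| ∧
        sSup {r : ℝ | ∃ x : EuclideanSpace ℝ (Fin d),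
          0 < ∑ j, |⟪a j, x⟫| ∧ r = |⟪a i, x⟫| / ∑ j, |⟪a j, x⟫|} - δ'
          < |⟪a i, x⟫| / ∑ j, |⟪a j, x⟫| := by
      intro i
      obtain ⟨r, hrS, hrlt⟩ := exists_lt_of_lt_csSup (hne i) (by linarith :
        sSup {r : ℝ | ∃ x : EuclideanSpace ℝ (Fin d),
          0 < ∑ j, |⟪a j, x⟫| ∧ r = |⟪a i, x⟫| / ∑ j, |⟪a j, x⟫|} - δ'
          < sSup {r : ℝ | ∃ x : EuclideanSpace ℝ (Fin d),
          0 < ∑ j, |⟪a j, x⟫| ∧ r = |⟪a i, x⟫| / ∑ j, |⟪a j, x⟫|})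
      obtain ⟨x, hx, rfl⟩ := hrS
      exact ⟨x, hx, hrlt⟩
    choose xx hx1 hx2 using hpick
    set Ci : Fin n → ℝ := fun i => (∑ l, |xx i l|) / (∑ j, |⟪a j, xx i⟫|) with hCidef
    have hCinn : ∀ i, 0 ≤ Ci i := fun i => div_nonneg
      (Finset.sum_nonneg fun l _ => abs_nonneg _) (hx1 i).le
    set C : ℝ := ∑ i, Ci i with hCdef
    have hC0 : 0 ≤ C := Finset.sum_nonneg fun i _ => hCinn i
    have hCile : ∀ i, Ci i ≤ C := fun i =>
      Finset.single_le_sum (fun i _ => hCinn i) (Finset.mem_univ i)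
    set ε : ℝ := δ / (2 * (C * d + 1)) with hεdef
    have hεpos : 0 < ε := by positivity
    have hεeq : ε * (2 * (C * (d:ℝ) + 1)) = δ := by
      rw [hεdef]; field_simp
    -- augmented family
    set b : Fin (n + d) → EuclideanSpace ℝ (Fin d) :=
      Fin.append a (fun l => ε • EuclideanSpace.single l (1:ℝ)) with hbdef
    have hMsplit : ∀ x : EuclideanSpace ℝ (Fin d),
        ∑ j : Fin (n + d), |⟪b j, x⟫| = (∑ j, |⟪a j, x⟫|) + ε * ∑ l, |x l| := by
      intro x
      rw [Fin.sum_univ_add]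
      congr 1
      · exact Finset.sum_congr rfl fun j _ => by rw [hbdef, Fin.append_left]
      · rw [Finset.mul_sum]
        refine Finset.sum_congr rfl fun l _ => ?_
        rw [hbdef, Fin.append_right, real_inner_smul_left,
          EuclideanSpace.inner_single_left]
        simp [abs_mul, abs_of_nonneg hεpos.le]
    have hker : ∀ x : EuclideanSpace ℝ (Fin d),
        (∑ j : Fin (n + d), |⟪b j, x⟫|) = 0 → x = 0 := by
      intro x hx
      rw [hMsplit] at hx
      have h1 : 0 ≤ ∑ j, |⟪a j, x⟫| := Finset.sum_nonneg fun j _ => abs_nonneg _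
      have h2 : 0 ≤ ∑ l, |x l| := Finset.sum_nonneg fun l _ => abs_nonneg _
      have h3 : ∑ l, |x l| = 0 := by nlinarith
      apply PiLp.ext
      intro l
      have := (Finset.sum_eq_zero_iff_of_nonneg fun l _ => abs_nonneg (x l)).1 h3
        l (Finset.mem_univ l)
      simpa using this
    obtain ⟨v, hv1, hv2⟩ := l1_core b hker
    set t : Fin n → ℝ := fun i => ∑ k, |⟪a i, v k⟫| with htdef
    have htnn : ∀ i, 0 ≤ t i := fun i => Finset.sum_nonneg fun k _ => abs_nonneg _
    have htsum : ∑ i, t i ≤ (d : ℝ) := by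
      rw [htdef]
      rw [Finset.sum_comm]
      have hbound : ∀ k : Fin d, ∑ i, |⟪a i, v k⟫| ≤ 1 := by
        intro k
        have h := hv1 k
        rw [hMsplit] at h
        have h2 : 0 ≤ ε * ∑ l, |(v k) l| :=
          mul_nonneg hεpos.le (Finset.sum_nonneg fun l _ => abs_nonneg _)
        linarith
      calc ∑ k : Fin d, ∑ i, |⟪a i, v k⟫| ≤ ∑ k : Fin d, (1:ℝ) :=
            Finset.sum_le_sum fun k _ => hbound k
        _ = (d : ℝ) := by simp
    have htd : ∀ i, t i ≤ (d : ℝ) := fun i =>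
      le_trans (Finset.single_le_sum (fun i _ => htnn i) (Finset.mem_univ i)) htsum
    -- per-index bound
    have hri : ∀ i : Fin n, sSup {r : ℝ | ∃ x : EuclideanSpace ℝ (Fin d),
        0 < ∑ j, |⟪a j, x⟫| ∧ r = |⟪a i, x⟫| / ∑ j, |⟪a j, x⟫|}
          ≤ t i + ε * (t i * Ci i) + δ' := by
      intro i
      have h2 := hx2 i
      have hNi : 0 < ∑ j, |⟪a j, xx i⟫| := hx1 i
      have hb := hv2 (a i) (xx i)
      rw [hMsplit] at hb
      have hdiv : |⟪a i, xx i⟫| / (∑ j, |⟪a j, xx i⟫|) ≤ t i + ε * (t i * Ci i) := by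
        rw [div_le_iff₀ hNi]
        have hCieq : Ci i * (∑ j, |⟪a j, xx i⟫|) = ∑ l, |xx i l| := by
          rw [hCidef]
          exact div_mul_cancel₀ _ hNi.ne'
        calc |⟪a i, xx i⟫|
            ≤ ((∑ j, |⟪a j, xx i⟫|) + ε * ∑ l, |xx i l|) * t i := hb
          _ = (t i + ε * (t i * Ci i)) * (∑ j, |⟪a j, xx i⟫|) := by
              rw [← hCieq]; ring
      linarith
    calc ∑ i, sSup {r : ℝ | ∃ x : EuclideanSpace ℝ (Fin d),
        0 < ∑ j, |⟪a j, x⟫| ∧ r = |⟪a i, x⟫| / ∑ j, |⟪a j, x⟫|}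
        ≤ ∑ i, (t i + ε * (t i * Ci i) + δ') := Finset.sum_le_sum fun i _ => hri i
      _ = (∑ i, t i) + ε * (∑ i, t i * Ci i) + (n : ℝ) * δ' := by
          rw [Finset.sum_add_distrib, Finset.sum_add_distrib, ← Finset.mul_sum]
          simp [Finset.sum_const, nsmul_eq_mul]
      _ ≤ (d : ℝ) + ε * ((d : ℝ) * C) + (n : ℝ) * δ' := by
          have hs : ∑ i, t i * Ci i ≤ (d : ℝ) * C := by
            calc ∑ i, t i * Ci i ≤ ∑ i, (d : ℝ) * Ci i :=
                  Finset.sum_le_sum fun i _ =>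
                    mul_le_mul_of_nonneg_right (htd i) (hCinn i)
              _ = (d : ℝ) * C := by rw [← Finset.mul_sum]
          have := mul_le_mul_of_nonneg_left hs hεpos.le
          linarith
      _ ≤ (d : ℝ) + δ / 2 + δ / 2 := by
          have h6 : ε * ((d : ℝ) * C) ≤ δ / 2 := by nlinarith [hεpos.le]
          have h7 : (n : ℝ) * δ' ≤ δ / 2 := by nlinarith [hδ'.le]
          linarith
      _ = (d : ℝ) + δ := by ring
  by_contra hcon
  push_neg at hcon
  have := key ((∑ i, sSup {r : ℝ | ∃ x : EuclideanSpace ℝ (Fin d),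
      0 < ∑ j, |⟪a j, x⟫| ∧ r = |⟪a i, x⟫| / ∑ j, |⟪a j, x⟫|} - (d : ℝ)) / 2)
    (by linarith)
  linarith
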